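/- Let (x₁,x₂,x₃) be a triple of real numbers with |xᵢ| < 2 for i = 1,2,3 and x₁² + x₂² + x₃² − x₁x₂x₃ < 4. Then for every element β of the group generated by β₁ and β₂, all three coordinates of β(x₁,x₂,x₃) have absolute value strictly less than 2 (and β(x₁,x₂,x₃) again satisfies the same inequality x'₁² + x'₂² + x'₃² − x'₁x'₂x'₃ < 4). -/

import Mathlib

/-- The braid-group generator `β₁`, as a bijection of `ℝ³`. -/
def braidEquiv₁ : Equiv.Perm (ℝ × ℝ × ℝ) where
  toFun p := (-p.1, p.2.2 - p.1 * p.2.1, p.2.1)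
  invFun p := (-p.1, p.2.2, p.2.1 - p.1 * p.2.2)
  left_inv := by rintro ⟨a, b, c⟩; simp only [Prod.mk.injEq]; exact ⟨by first | ring | trivial, by first | ring | trivial, by first | ring | trivial⟩
  right_inv := by rintro ⟨a, b, c⟩; simp only [Prod.mk.injEq]; exact ⟨by first | ring | trivial, by first | ring | trivial, by first | ring | trivial⟩

/-- The braid-group generator `β₂`, as a bijection of `ℝ³`. -/
def braidEquiv₂ : Equiv.Perm (ℝ × ℝ × ℝ) where
  toFun p := (p.2.2, -p.2.1, p.1 - p.2.1 * p.2.2)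
  invFun p := (p.2.2 - p.1 * p.2.1, -p.2.1, p.1)
  left_inv := by rintro ⟨a, b, c⟩; simp only [Prod.mk.injEq]; exact ⟨by first | ring | trivial, by first | ring | trivial, by first | ring | trivial⟩
  right_inv := by rintro ⟨a, b, c⟩; simp only [Prod.mk.injEq]; exact ⟨by first | ring | trivial, by first | ring | trivial, by first | ring | trivial⟩

/-- The braid group: the group of bijections of `ℝ³` generated by `β₁` and `β₂`. -/
def braidSubgroup : Subgroup (Equiv.Perm (ℝ × ℝ × ℝ)) :=
  Subgroup.closure {braidEquiv₁, braidEquiv₂}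

/-- A triple is admissible if at most one of its coordinates equals zero. -/
def Admissible (p : ℝ × ℝ × ℝ) : Prop :=
  ¬(p.1 = 0 ∧ p.2.1 = 0) ∧ ¬(p.1 = 0 ∧ p.2.2 = 0) ∧ ¬(p.2.1 = 0 ∧ p.2.2 = 0)

/-- An admissible triple is good if every braid image of it has all coordinates of the
form `-2 cos (π r)` with `r ∈ [0,1]` rational. -/
def Good (p : ℝ × ℝ × ℝ) : Prop :=
  Admissible p ∧ ∀ g ∈ braidSubgroup, ∃ r₁ r₂ r₃ : ℚ,
    0 ≤ r₁ ∧ r₁ ≤ 1 ∧ 0 ≤ r₂ ∧ r₂ ≤ 1 ∧ 0 ≤ r₃ ∧ r₃ ≤ 1 ∧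
    g p = (-2 * Real.cos (Real.pi * r₁), -2 * Real.cos (Real.pi * r₂),
           -2 * Real.cos (Real.pi * r₃))

/-- Two triples are equivalent when one is obtained from the other by changing the signs
of exactly two of the three coordinates (or by changing no signs). -/
def TripleEquiv (p q : ℝ × ℝ × ℝ) : Prop :=
  q = p ∨ q = (p.1, -p.2.1, -p.2.2) ∨ q = (-p.1, p.2.1, -p.2.2) ∨ q = (-p.1, -p.2.1, p.2.2)


def BddTriple (q : ℝ × ℝ × ℝ) : Prop :=
  (|q.1| < 2 ∧ |q.2.1| < 2 ∧ |q.2.2| < 2) ∧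
  q.1 ^ 2 + q.2.1 ^ 2 + q.2.2 ^ 2 - q.1 * q.2.1 * q.2.2 < 4

lemma key_third (a b c : ℝ) (ha : |a| < 2) (hb : |b| < 2)
    (h : a ^ 2 + b ^ 2 + c ^ 2 - a * b * c < 4) : |c| < 2 := by
  rw [abs_lt] at *
  obtain ⟨ha1, ha2⟩ := ha
  obtain ⟨hb1, hb2⟩ := hb
  have hab1 : a * b < 4 := by nlinarith
  have hab2 : -4 < a * b := by nlinarith
  constructor
  · by_contra hc
    push_neg at hc
    nlinarith [sq_nonneg (a + b),
      mul_nonneg (by linarith : (0:ℝ) ≤ -2 - c) (by linarith : (0:ℝ) ≤ 2 + a * b - c)]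
  · by_contra hc
    push_neg at hc
    nlinarith [sq_nonneg (a - b),
      mul_nonneg (by linarith : (0:ℝ) ≤ c - 2) (by linarith : (0:ℝ) ≤ c + 2 - a * b)]

lemma pres1 (q : ℝ × ℝ × ℝ) (h : BddTriple q) : BddTriple (braidEquiv₁ q) := by
  obtain ⟨⟨h1, h2, h3⟩, h4⟩ := h
  obtain ⟨a, b, c⟩ := q
  simp only [braidEquiv₁, Equiv.coe_fn_mk, BddTriple] at *
  have hq : (-a) ^ 2 + (c - a * b) ^ 2 + b ^ 2 - -a * (c - a * b) * b < 4 := by nlinarith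
  refine ⟨⟨by simpa using h1, ?_, h2⟩, hq⟩
  · exact key_third (-a) b _ (by simpa using h1) h2 (by nlinarith)

lemma pres1' (q : ℝ × ℝ × ℝ) (h : BddTriple q) : BddTriple (braidEquiv₁⁻¹ q) := by
  obtain ⟨⟨h1, h2, h3⟩, h4⟩ := h
  obtain ⟨a, b, c⟩ := q
  simp only [braidEquiv₁, Equiv.Perm.inv_def, Equiv.coe_fn_symm_mk, BddTriple] at *
  have hq : (-a) ^ 2 + c ^ 2 + (b - a * c) ^ 2 - -a * c * (b - a * c) < 4 := by nlinarith
  refine ⟨⟨by simpa using h1, h3, ?_⟩, hq⟩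
  · exact key_third (-a) c _ (by simpa using h1) h3 (by nlinarith)

lemma pres2 (q : ℝ × ℝ × ℝ) (h : BddTriple q) : BddTriple (braidEquiv₂ q) := by
  obtain ⟨⟨h1, h2, h3⟩, h4⟩ := h
  obtain ⟨a, b, c⟩ := q
  simp only [braidEquiv₂, Equiv.coe_fn_mk, BddTriple] at *
  have hq : c ^ 2 + (-b) ^ 2 + (a - b * c) ^ 2 - c * -b * (a - b * c) < 4 := by nlinarith
  refine ⟨⟨h3, by simpa using h2, ?_⟩, hq⟩
  · exact key_third c (-b) _ h3 (by simpa using h2) (by nlinarith)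

lemma pres2' (q : ℝ × ℝ × ℝ) (h : BddTriple q) : BddTriple (braidEquiv₂⁻¹ q) := by
  obtain ⟨⟨h1, h2, h3⟩, h4⟩ := h
  obtain ⟨a, b, c⟩ := q
  simp only [braidEquiv₂, Equiv.Perm.inv_def, Equiv.coe_fn_symm_mk, BddTriple] at *
  have hq : (c - a * b) ^ 2 + (-b) ^ 2 + a ^ 2 - (c - a * b) * -b * a < 4 := by nlinarith
  refine ⟨⟨?_, by simpa using h2, h1⟩, hq⟩
  · exact key_third a (-b) _ h1 (by simpa using h2) (by nlinarith)

lemma braid_pres (g : Equiv.Perm (ℝ × ℝ × ℝ)) (hg : g ∈ braidSubgroup) :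
    (∀ q, BddTriple q → BddTriple (g q)) ∧ ∀ q, BddTriple q → BddTriple (g⁻¹ q) := by
  induction hg using Subgroup.closure_induction with
  | mem x hx =>
    rcases hx with rfl | rfl
    · exact ⟨pres1, pres1'⟩
    · exact ⟨pres2, pres2'⟩
  | one => simp
  | mul x y _ _ hx hy =>
    refine ⟨fun q hq => ?_, fun q hq => ?_⟩
    · simpa using hx.1 _ (hy.1 _ hq)
    · simpa [mul_inv_rev] using hy.2 _ (hx.2 _ hq)
  | inv x _ hx => exact ⟨hx.2, fun q hq => by simpa using hx.1 q hq⟩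

/-- The set of triples with all `|xᵢ| < 2` and
`x₁² + x₂² + x₃² - x₁x₂x₃ < 4` is invariant under the braid group. -/
theorem braid_preserves_bounded_triples (p : ℝ × ℝ × ℝ)
    (hb1 : |p.1| < 2) (hb2 : |p.2.1| < 2) (hb3 : |p.2.2| < 2)
    (hlt : p.1 ^ 2 + p.2.1 ^ 2 + p.2.2 ^ 2 - p.1 * p.2.1 * p.2.2 < 4) :
    ∀ g ∈ braidSubgroup,
      (|(g p).1| < 2 ∧ |(g p).2.1| < 2 ∧ |(g p).2.2| < 2) ∧
      (g p).1 ^ 2 + (g p).2.1 ^ 2 + (g p).2.2 ^ 2 -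
        (g p).1 * (g p).2.1 * (g p).2.2 < 4 := by
  intro g hg
  exact (braid_pres g hg).1 p ⟨⟨hb1, hb2, hb3⟩, hlt⟩
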